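/- Suppose x, y, θ, p : ℝ × [0,ℓ] → ℝ are smooth and satisfy the free planar Cosserat rod equations ρẍ + Kx⁗ = (p x′)′, ρÿ + Ky⁗ = (p y′)′, αθ̈ − βθ″ = 0, together with the inextensibility constraint (x′)² + (y′)² = 1, on ℝ × [0,ℓ]. Then the local energy conservation law ∂/∂t [ (ρ/2)(ẋ² + ẏ²) + (α/2)θ̇² + (K/2)((x″)² + (y″)²) + (β/2)(θ′)² ] = ∂/∂s [ (p x′ − K x‴) ẋ + (p y′ − K y‴) ẏ + β θ′ θ̇ + K (x″ ẋ′ + y″ ẏ′) ] holds at every point of ℝ × [0,ℓ]. -/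

import Mathlib

open MeasureTheory

/-- Partial derivative with respect to the first (time) variable. -/
noncomputable def pt (f : ℝ → ℝ → ℝ) : ℝ → ℝ → ℝ := fun t s => deriv (fun τ => f τ s) t

/-- Partial derivative with respect to the second (arclength) variable. -/
noncomputable def ps (f : ℝ → ℝ → ℝ) : ℝ → ℝ → ℝ := fun t s => deriv (fun σ => f t σ) s

/-- Smoothness of a field of two real variables. -/
def Smooth2 (f : ℝ → ℝ → ℝ) : Prop := ContDiff ℝ (⊤ : ℕ∞) (fun p : ℝ × ℝ => f p.1 p.2)

section helpers

variable {f : ℝ → ℝ → ℝ}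

private lemma curveT_hasDerivAt (t s : ℝ) :
    HasDerivAt (fun τ : ℝ => ((τ, s) : ℝ × ℝ)) (1, 0) t :=
  (hasDerivAt_id t).prodMk (hasDerivAt_const t s)

private lemma curveS_hasDerivAt (t s : ℝ) :
    HasDerivAt (fun σ : ℝ => ((t, σ) : ℝ × ℝ)) (0, 1) s :=
  (hasDerivAt_const s t).prodMk (hasDerivAt_id s)

lemma hasDerivAt_pt (hf : Smooth2 f) (t s : ℝ) :
    HasDerivAt (fun τ => f τ s) (pt f t s) t := by
  have h1 : HasFDerivAt (fun q : ℝ × ℝ => f q.1 q.2)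
      (fderiv ℝ (fun q : ℝ × ℝ => f q.1 q.2) (t, s)) (t, s) :=
    (hf.differentiable (by simp) (t, s)).hasFDerivAt
  have h3 := h1.comp_hasDerivAt t (curveT_hasDerivAt t s)
  have e : pt f t s = fderiv ℝ (fun q : ℝ × ℝ => f q.1 q.2) (t, s) (1, 0) := h3.deriv
  rw [e]
  exact h3

lemma hasDerivAt_ps (hf : Smooth2 f) (t s : ℝ) :
    HasDerivAt (fun σ => f t σ) (ps f t s) s := by
  have h1 : HasFDerivAt (fun q : ℝ × ℝ => f q.1 q.2)
      (fderiv ℝ (fun q : ℝ × ℝ => f q.1 q.2) (t, s)) (t, s) :=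
    (hf.differentiable (by simp) (t, s)).hasFDerivAt
  have h3 := h1.comp_hasDerivAt s (curveS_hasDerivAt t s)
  have e : ps f t s = fderiv ℝ (fun q : ℝ × ℝ => f q.1 q.2) (t, s) (0, 1) := h3.deriv
  rw [e]
  exact h3

lemma pt_eq_fderiv (hf : Smooth2 f) (t s : ℝ) :
    pt f t s = fderiv ℝ (fun q : ℝ × ℝ => f q.1 q.2) (t, s) (1, 0) := by
  have h1 : HasFDerivAt (fun q : ℝ × ℝ => f q.1 q.2)
      (fderiv ℝ (fun q : ℝ × ℝ => f q.1 q.2) (t, s)) (t, s) :=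
    (hf.differentiable (by simp) (t, s)).hasFDerivAt
  exact (h1.comp_hasDerivAt t (curveT_hasDerivAt t s)).deriv

lemma ps_eq_fderiv (hf : Smooth2 f) (t s : ℝ) :
    ps f t s = fderiv ℝ (fun q : ℝ × ℝ => f q.1 q.2) (t, s) (0, 1) := by
  have h1 : HasFDerivAt (fun q : ℝ × ℝ => f q.1 q.2)
      (fderiv ℝ (fun q : ℝ × ℝ => f q.1 q.2) (t, s)) (t, s) :=
    (hf.differentiable (by simp) (t, s)).hasFDerivAt
  exact (h1.comp_hasDerivAt s (curveS_hasDerivAt t s)).deriv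

lemma Smooth2.ptS (hf : Smooth2 f) : Smooth2 (pt f) := by
  have h : ContDiff ℝ (⊤ : ℕ∞)
      (fun q : ℝ × ℝ => fderiv ℝ (fun q : ℝ × ℝ => f q.1 q.2) q (1, 0)) :=
    (hf.fderiv_right (by exact_mod_cast le_top)).clm_apply contDiff_const
  have e : (fun q : ℝ × ℝ => pt f q.1 q.2)
      = fun q : ℝ × ℝ => fderiv ℝ (fun q : ℝ × ℝ => f q.1 q.2) q (1, 0) :=
    funext fun q => pt_eq_fderiv hf q.1 q.2
  rw [Smooth2, e]; exact h

lemma Smooth2.psS (hf : Smooth2 f) : Smooth2 (ps f) := by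
  have h : ContDiff ℝ (⊤ : ℕ∞)
      (fun q : ℝ × ℝ => fderiv ℝ (fun q : ℝ × ℝ => f q.1 q.2) q (0, 1)) :=
    (hf.fderiv_right (by exact_mod_cast le_top)).clm_apply contDiff_const
  have e : (fun q : ℝ × ℝ => ps f q.1 q.2)
      = fun q : ℝ × ℝ => fderiv ℝ (fun q : ℝ × ℝ => f q.1 q.2) q (0, 1) :=
    funext fun q => ps_eq_fderiv hf q.1 q.2
  rw [Smooth2, e]; exact h

/-- Clairaut: mixed partials commute for smooth functions. -/
lemma pt_ps_comm (hf : Smooth2 f) : pt (ps f) = ps (pt f) := by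
  funext t s
  set F : ℝ × ℝ → ℝ := fun q => f q.1 q.2 with hF
  -- pt (ps f) t s = fderiv (fderiv F) (t,s) (1,0) (0,1)
  have hfd : ContDiff ℝ (⊤ : ℕ∞) (fderiv ℝ F) :=
    hf.fderiv_right (by exact_mod_cast (le_top : (⊤:ℕ∞) + 1 ≤ ⊤))
  have hd1 : DifferentiableAt ℝ (fderiv ℝ F) (t, s) :=
    (hfd.differentiable (by simp)) (t, s)
  have hA : pt (ps f) t s = fderiv ℝ (fderiv ℝ F) (t, s) (1, 0) (0, 1) := by
    have hg : HasFDerivAt (fun q : ℝ × ℝ => fderiv ℝ F q (0, 1))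
        (((ContinuousLinearMap.apply ℝ ℝ ((0 : ℝ), (1 : ℝ))).comp
          (fderiv ℝ (fderiv ℝ F) (t, s)))) (t, s) :=
      ((ContinuousLinearMap.apply ℝ ℝ ((0 : ℝ), (1 : ℝ))).hasFDerivAt).comp (t, s)
        hd1.hasFDerivAt
    have h4 : HasDerivAt (fun τ => fderiv ℝ F (τ, s) (0, 1))
        ((((ContinuousLinearMap.apply ℝ ℝ ((0 : ℝ), (1 : ℝ))).comp
          (fderiv ℝ (fderiv ℝ F) (t, s)))) (1, 0)) t :=
      (hg.comp_hasDerivAt t (curveT_hasDerivAt t s) :)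
    have e : (fun τ => ps f τ s) = fun τ => fderiv ℝ F (τ, s) (0, 1) :=
      funext fun τ => ps_eq_fderiv hf τ s
    have : pt (ps f) t s = deriv (fun τ => fderiv ℝ F (τ, s) (0, 1)) t := by
      rw [pt, e]
    rw [this, h4.deriv]
    rfl
  have hB : ps (pt f) t s = fderiv ℝ (fderiv ℝ F) (t, s) (0, 1) (1, 0) := by
    have hg : HasFDerivAt (fun q : ℝ × ℝ => fderiv ℝ F q (1, 0))
        (((ContinuousLinearMap.apply ℝ ℝ ((1 : ℝ), (0 : ℝ))).comp
          (fderiv ℝ (fderiv ℝ F) (t, s)))) (t, s) :=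
      ((ContinuousLinearMap.apply ℝ ℝ ((1 : ℝ), (0 : ℝ))).hasFDerivAt).comp (t, s)
        hd1.hasFDerivAt
    have h4 : HasDerivAt (fun σ => fderiv ℝ F (t, σ) (1, 0))
        ((((ContinuousLinearMap.apply ℝ ℝ ((1 : ℝ), (0 : ℝ))).comp
          (fderiv ℝ (fderiv ℝ F) (t, s)))) (0, 1)) s :=
      hg.comp_hasDerivAt s (curveS_hasDerivAt t s)
    have e : (fun σ => pt f t σ) = fun σ => fderiv ℝ F (t, σ) (1, 0) :=
      funext fun σ => pt_eq_fderiv hf t σ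
    have : ps (pt f) t s = deriv (fun σ => fderiv ℝ F (t, σ) (1, 0)) s := by
      rw [ps, e]
    rw [this, h4.deriv]
    rfl
  have hsym := second_derivative_symmetric
    (f := F) (f' := fderiv ℝ F) (f'' := fderiv ℝ (fderiv ℝ F) (t, s))
    (fun z => ((hf.differentiable (by simp)) z).hasFDerivAt)
    hd1.hasFDerivAt ((1 : ℝ), (0 : ℝ)) ((0 : ℝ), (1 : ℝ))
  rw [hA, hB, hsym]

end helpers

/-- Energy density of the planar Cosserat rod. -/
noncomputable def Edens (ρ α β K : ℝ) (x y θ : ℝ → ℝ → ℝ) : ℝ → ℝ → ℝ := fun t s =>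
  ρ / 2 * ((pt x t s) ^ 2 + (pt y t s) ^ 2) + α / 2 * (pt θ t s) ^ 2
    + K / 2 * ((ps (ps x) t s) ^ 2 + (ps (ps y) t s) ^ 2) + β / 2 * (ps θ t s) ^ 2

/-- local energy conservation for the free planar Cosserat rod. -/
theorem local_energy_conservation_free_rod
    (ρ α β K ℓ : ℝ) (hρ : 0 < ρ) (hα : 0 < α) (hβ : 0 < β) (hK : 0 < K) (hℓ : 0 < ℓ)
    (x y θ p : ℝ → ℝ → ℝ)
    (hx : Smooth2 x) (hy : Smooth2 y) (hθ : Smooth2 θ) (hp : Smooth2 p)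
    (heqx : ∀ t : ℝ, ∀ s ∈ Set.Icc (0 : ℝ) ℓ,
      ρ * pt (pt x) t s + K * ps (ps (ps (ps x))) t s
        = ps (fun t' s' => p t' s' * ps x t' s') t s)
    (heqy : ∀ t : ℝ, ∀ s ∈ Set.Icc (0 : ℝ) ℓ,
      ρ * pt (pt y) t s + K * ps (ps (ps (ps y))) t s
        = ps (fun t' s' => p t' s' * ps y t' s') t s)
    (heqθ : ∀ t : ℝ, ∀ s ∈ Set.Icc (0 : ℝ) ℓ,
      α * pt (pt θ) t s - β * ps (ps θ) t s = 0)
    (hinext : ∀ t : ℝ, ∀ s ∈ Set.Icc (0 : ℝ) ℓ, (ps x t s) ^ 2 + (ps y t s) ^ 2 = 1) :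
    ∀ t : ℝ, ∀ s ∈ Set.Icc (0 : ℝ) ℓ,
      pt (Edens ρ α β K x y θ) t s
        = ps (fun t' s' =>
            (p t' s' * ps x t' s' - K * ps (ps (ps x)) t' s') * pt x t' s'
              + (p t' s' * ps y t' s' - K * ps (ps (ps y)) t' s') * pt y t' s'
              + β * ps θ t' s' * pt θ t' s'
              + K * (ps (ps x) t' s' * ps (pt x) t' s' + ps (ps y) t' s' * ps (pt y) t' s')) t s := by
  intro t s hs
  -- time derivative of the energy density
  have Hx1 := hasDerivAt_pt hx.ptS t s   -- τ ↦ pt x τ s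
  have Hy1 := hasDerivAt_pt hy.ptS t s
  have Hθ1 := hasDerivAt_pt hθ.ptS t s
  have Hx2 := hasDerivAt_pt hx.psS.psS t s  -- τ ↦ ps (ps x) τ s
  have Hy2 := hasDerivAt_pt hy.psS.psS t s
  have Hθ2 := hasDerivAt_pt hθ.psS t s      -- τ ↦ ps θ τ s
  have HE := ((((((Hx1.pow 2).add (Hy1.pow 2)).const_mul (ρ / 2)).add
      ((Hθ1.pow 2).const_mul (α / 2))).add
      (((Hx2.pow 2).add (Hy2.pow 2)).const_mul (K / 2))).add
      ((Hθ2.pow 2).const_mul (β / 2)))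
  have hL : pt (Edens ρ α β K x y θ) t s
      = ρ / 2 * ((2 : ℕ) * pt x t s ^ (2 - 1) * pt (pt x) t s
          + (2 : ℕ) * pt y t s ^ (2 - 1) * pt (pt y) t s)
        + α / 2 * ((2 : ℕ) * pt θ t s ^ (2 - 1) * pt (pt θ) t s)
        + K / 2 * ((2 : ℕ) * ps (ps x) t s ^ (2 - 1) * pt (ps (ps x)) t s
          + (2 : ℕ) * ps (ps y) t s ^ (2 - 1) * pt (ps (ps y)) t s)
        + β / 2 * ((2 : ℕ) * ps θ t s ^ (2 - 1) * pt (ps θ) t s) := HE.deriv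
  -- arclength derivative of the flux
  have Gp := hasDerivAt_ps hp t s           -- σ ↦ p t σ
  have Gx1 := hasDerivAt_ps hx.psS t s       -- σ ↦ ps x t σ
  have Gy1 := hasDerivAt_ps hy.psS t s
  have Gx3 := hasDerivAt_ps hx.psS.psS.psS t s  -- σ ↦ ps³x
  have Gy3 := hasDerivAt_ps hy.psS.psS.psS t s
  have Gxt := hasDerivAt_ps hx.ptS t s       -- σ ↦ pt x t σ
  have Gyt := hasDerivAt_ps hy.ptS t s
  have Gθ1 := hasDerivAt_ps hθ.psS t s
  have Gθt := hasDerivAt_ps hθ.ptS t s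
  have Gx2 := hasDerivAt_ps hx.psS.psS t s   -- σ ↦ ps (ps x) t σ
  have Gy2 := hasDerivAt_ps hy.psS.psS t s
  have Gxts := hasDerivAt_ps hx.ptS.psS t s  -- σ ↦ ps (pt x) t σ
  have Gyts := hasDerivAt_ps hy.ptS.psS t s
  have HF := (((((Gp.mul Gx1).sub (Gx3.const_mul K)).mul Gxt).add
      ((((Gp.mul Gy1).sub (Gy3.const_mul K)).mul Gyt))).add
      (((Gθ1.const_mul β).mul Gθt))).add
      ((((Gx2.mul Gxts).add (Gy2.mul Gyts)).const_mul K))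
  have hR : ps (fun t' s' =>
        (p t' s' * ps x t' s' - K * ps (ps (ps x)) t' s') * pt x t' s'
          + (p t' s' * ps y t' s' - K * ps (ps (ps y)) t' s') * pt y t' s'
          + β * ps θ t' s' * pt θ t' s'
          + K * (ps (ps x) t' s' * ps (pt x) t' s' + ps (ps y) t' s' * ps (pt y) t' s')) t s
      = ((ps p t s * ps x t s + p t s * ps (ps x) t s) - K * ps (ps (ps (ps x))) t s)
          * pt x t s
        + (p t s * ps x t s - K * ps (ps (ps x)) t s) * ps (pt x) t s
        + (((ps p t s * ps y t s + p t s * ps (ps y) t s) - K * ps (ps (ps (ps y))) t s)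
          * pt y t s
        + (p t s * ps y t s - K * ps (ps (ps y)) t s) * ps (pt y) t s)
        + (β * ps (ps θ) t s * pt θ t s + β * ps θ t s * ps (pt θ) t s)
        + K * ((ps (ps (ps x)) t s * ps (pt x) t s + ps (ps x) t s * ps (ps (pt x)) t s)
          + (ps (ps (ps y)) t s * ps (pt y) t s + ps (ps y) t s * ps (ps (pt y)) t s)) :=
    HF.deriv
  -- the PDEs with the product rule expanded
  have hpx : ps (fun t' s' => p t' s' * ps x t' s') t s
      = ps p t s * ps x t s + p t s * ps (ps x) t s := (Gp.mul Gx1).deriv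
  have hpy : ps (fun t' s' => p t' s' * ps y t' s') t s
      = ps p t s * ps y t s + p t s * ps (ps y) t s := (Gp.mul Gy1).deriv
  have hex : ρ * pt (pt x) t s + K * ps (ps (ps (ps x))) t s
      = ps p t s * ps x t s + p t s * ps (ps x) t s := by
    rw [← heqx t s hs] at hpx; exact hpx
  have hey : ρ * pt (pt y) t s + K * ps (ps (ps (ps y))) t s
      = ps p t s * ps y t s + p t s * ps (ps y) t s := by
    rw [← heqy t s hs] at hpy; exact hpy
  have heθ := heqθ t s hs
  -- Clairaut relations
  have cx : pt (ps x) = ps (pt x) := pt_ps_comm hx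
  have cy : pt (ps y) = ps (pt y) := pt_ps_comm hy
  have cθ : pt (ps θ) = ps (pt θ) := pt_ps_comm hθ
  have cx2 : pt (ps (ps x)) t s = ps (ps (pt x)) t s := by
    rw [pt_ps_comm hx.psS, cx]
  have cy2 : pt (ps (ps y)) t s = ps (ps (pt y)) t s := by
    rw [pt_ps_comm hy.psS, cy]
  -- time derivative of the inextensibility constraint
  have hc0 : HasDerivAt (fun τ => (ps x τ s) ^ 2 + (ps y τ s) ^ 2)
      ((2 : ℕ) * ps x t s ^ (2 - 1) * pt (ps x) t s
        + (2 : ℕ) * ps y t s ^ (2 - 1) * pt (ps y) t s) t :=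
    ((hasDerivAt_pt hx.psS t s).pow 2).add ((hasDerivAt_pt hy.psS t s).pow 2)
  have hfun : (fun τ => (ps x τ s) ^ 2 + (ps y τ s) ^ 2) = fun _ => (1 : ℝ) :=
    funext fun τ => hinext τ s hs
  rw [hfun] at hc0
  have hcon : (2 : ℕ) * ps x t s ^ (2 - 1) * pt (ps x) t s
      + (2 : ℕ) * ps y t s ^ (2 - 1) * pt (ps y) t s = 0 :=
    hc0.unique (hasDerivAt_const t 1)
  rw [cx, cy] at hcon
  rw [hL, hR, cx2, cy2, cθ]
  push_cast at hcon ⊢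
  linear_combination (pt x t s) * hex + (pt y t s) * hey + (pt θ t s) * heθ
    - p t s / 2 * hcon
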